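/- arXiv:1912.01773 — 6 statements merged into one kernel-verified Lean document; each statement's English description precedes it below -/
import Mathlib

section
/- For all real numbers x > 0 and θ ∈ [0, π/2], cosh(x) ≤ cosh(x·sin θ) · cosh(x·cos θ). -/
/-- `sinh u ≤ u * cosh u` for `u ≥ 0`. -/
lemma aux_sinh_le_mul_cosh {u : ℝ} (hu : 0 ≤ u) : Real.sinh u ≤ u * Real.cosh u := by
  have hmono : MonotoneOn (fun u : ℝ => u * Real.cosh u - Real.sinh u) (Set.Ici 0) := by
    apply monotoneOn_of_deriv_nonneg (convex_Ici 0)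
    · fun_prop
    · intro t _
      exact ((( hasDerivAt_id' t).mul (Real.hasDerivAt_cosh t)).sub
        (Real.hasDerivAt_sinh t)).differentiableAt.differentiableWithinAt
    · intro t ht
      rw [interior_Ici] at ht
      have hd : HasDerivAt (fun u : ℝ => u * Real.cosh u - Real.sinh u)
          (t * Real.sinh t) t := by
        have h1 := (( hasDerivAt_id' t).mul (Real.hasDerivAt_cosh t)).sub
          (Real.hasDerivAt_sinh t)
        exact h1.congr_deriv (by ring)
      rw [hd.deriv]
      have : 0 ≤ Real.sinh t := Real.sinh_nonneg_iff.mpr ht.le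
      exact mul_nonneg ht.le (Real.sinh_nonneg_iff.mpr ht.le)
  have h0 : (0 : ℝ) ∈ Set.Ici (0 : ℝ) := Set.self_mem_Ici
  have := hmono h0 (Set.mem_Ici.mpr hu) hu
  simpa using this

/-- `u ↦ sinh u / u` is monotone on `(0, ∞)`. -/
lemma aux_sinh_div_mono : MonotoneOn (fun u : ℝ => Real.sinh u / u) (Set.Ioi 0) := by
  apply monotoneOn_of_deriv_nonneg (convex_Ioi 0)
  · apply ContinuousOn.div Real.continuous_sinh.continuousOn continuousOn_id
    intro t ht
    exact ne_of_gt ht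
  · rw [interior_Ioi]
    intro t ht
    exact (((Real.hasDerivAt_sinh t).div (hasDerivAt_id' t)
      (ne_of_gt ht))).differentiableAt.differentiableWithinAt
  · rw [interior_Ioi]
    intro t ht
    have hd := (Real.hasDerivAt_sinh t).div (hasDerivAt_id' t) (by simpa using (ne_of_gt (Set.mem_Ioi.mp ht)))
    rw [show deriv (fun u : ℝ => Real.sinh u / u) t = _ from hd.deriv]
    have h1 : Real.sinh t ≤ t * Real.cosh t := aux_sinh_le_mul_cosh ht.le
    have h2 : (0:ℝ) < t ^ 2 := pow_pos (Set.mem_Ioi.mp ht) 2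
    apply div_nonneg _ h2.le
    simp only [id_eq, mul_one]
    linarith

/-- `t ↦ cosh (√t)` is convex on `[0, ∞)`. -/
lemma aux_convex_cosh_sqrt : ConvexOn ℝ (Set.Ici 0) (fun t : ℝ => Real.cosh (Real.sqrt t)) := by
  have hderiv : ∀ t ∈ Set.Ioi (0:ℝ), HasDerivAt (fun t : ℝ => Real.cosh (Real.sqrt t))
      (Real.sinh (Real.sqrt t) * (1 / (2 * Real.sqrt t))) t := by
    intro t ht
    exact (Real.hasDerivAt_cosh (Real.sqrt t)).comp t (Real.hasDerivAt_sqrt (ne_of_gt ht))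
  apply MonotoneOn.convexOn_of_deriv (convex_Ici 0)
  · fun_prop
  · rw [interior_Ici]
    intro t ht
    exact (hderiv t ht).differentiableAt.differentiableWithinAt
  · rw [interior_Ici]
    intro t₁ ht₁ t₂ ht₂ h12
    rw [(hderiv t₁ ht₁).deriv, (hderiv t₂ ht₂).deriv]
    have hs₁ : 0 < Real.sqrt t₁ := Real.sqrt_pos.mpr ht₁
    have hs₂ : 0 < Real.sqrt t₂ := Real.sqrt_pos.mpr ht₂
    have hs : Real.sqrt t₁ ≤ Real.sqrt t₂ := Real.sqrt_le_sqrt h12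
    have := aux_sinh_div_mono (Set.mem_Ioi.mpr hs₁) (Set.mem_Ioi.mpr hs₂) hs
    have e1 : Real.sinh (Real.sqrt t₁) * (1 / (2 * Real.sqrt t₁))
        = (Real.sinh (Real.sqrt t₁) / Real.sqrt t₁) / 2 := by
      ring
    have e2 : Real.sinh (Real.sqrt t₂) * (1 / (2 * Real.sqrt t₂))
        = (Real.sinh (Real.sqrt t₂) / Real.sqrt t₂) / 2 := by
      ring
    rw [e1, e2]
    linarith

theorem cosh_le_cosh_sin_mul_cosh_cos (x θ : ℝ) (hx : 0 < x)
    (hθ : θ ∈ Set.Icc 0 (Real.pi / 2)) :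
    Real.cosh x ≤ Real.cosh (x * Real.sin θ) * Real.cosh (x * Real.cos θ) := by
  obtain ⟨hθ0, hθ1⟩ := hθ
  set a := x * Real.sin θ with ha_def
  set b := x * Real.cos θ with hb_def
  have hsin : 0 ≤ Real.sin θ := Real.sin_nonneg_of_nonneg_of_le_pi hθ0
    (le_trans hθ1 (by linarith [Real.pi_pos]))
  have hcos : 0 ≤ Real.cos θ := Real.cos_nonneg_of_mem_Icc ⟨by linarith [Real.pi_pos], hθ1⟩
  have ha : 0 ≤ a := mul_nonneg hx.le hsin
  have hb : 0 ≤ b := mul_nonneg hx.le hcos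
  have hab : a ^ 2 + b ^ 2 = x ^ 2 := by
    have := Real.sin_sq_add_cos_sq θ
    rw [ha_def, hb_def]; nlinarith [Real.sin_sq_add_cos_sq θ]
  -- apply convexity at the points (a+b)^2 and (a-b)^2
  have hp : ((a + b) ^ 2 : ℝ) ∈ Set.Ici (0:ℝ) := Set.mem_Ici.mpr (by positivity)
  have hq : ((a - b) ^ 2 : ℝ) ∈ Set.Ici (0:ℝ) := Set.mem_Ici.mpr (by positivity)
  have key := aux_convex_cosh_sqrt.2 hp hq (by norm_num : (0:ℝ) ≤ (1:ℝ)/2)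
    (by norm_num : (0:ℝ) ≤ (1:ℝ)/2) (by norm_num)
  have hmid : (1/2 : ℝ) • ((a + b) ^ 2) + (1/2 : ℝ) • ((a - b) ^ 2) = x ^ 2 := by
    simp only [smul_eq_mul]
    nlinarith [hab]
  rw [hmid] at key
  have hx2 : Real.sqrt (x ^ 2) = x := by
    rw [Real.sqrt_sq hx.le]
  have hpp : Real.sqrt ((a + b) ^ 2) = a + b := Real.sqrt_sq (by linarith)
  have hqq : Real.cosh (Real.sqrt ((a - b) ^ 2)) = Real.cosh (a - b) := by
    rw [Real.sqrt_sq_eq_abs, Real.cosh_abs]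
  simp only [smul_eq_mul, hx2, hpp, hqq] at key
  have hadd : Real.cosh (a + b) = Real.cosh a * Real.cosh b + Real.sinh a * Real.sinh b :=
    Real.cosh_add a b
  have hsub : Real.cosh (a - b) = Real.cosh a * Real.cosh b - Real.sinh a * Real.sinh b :=
    Real.cosh_sub a b
  calc Real.cosh x ≤ 1/2 * Real.cosh (a + b) + 1/2 * Real.cosh (a - b) := key
    _ = Real.cosh a * Real.cosh b := by rw [hadd, hsub]; ring
end

section
/- For all real numbers x ≥ 0 and a, b ≥ 0 with a² + b² = 1, cosh(x) ≤ cosh(a·x) · cosh(b·x). -/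
private lemma pow_midpoint (n : ℕ) (p q : ℝ) (hp : 0 ≤ p) (hq : 0 ≤ q) :
    2 * ((p + q) / 2) ^ n ≤ p ^ n + q ^ n := by
  have h := (convexOn_pow n).2 hp hq (by norm_num : (0:ℝ) ≤ 1/2)
    (by norm_num : (0:ℝ) ≤ 1/2) (by norm_num)
  simp only [smul_eq_mul] at h
  calc 2 * ((p + q) / 2) ^ n = 2 * (1/2 * p + 1/2 * q) ^ n := by ring_nf
    _ ≤ 2 * (1/2 * p ^ n + 1/2 * q ^ n) := by linarith
    _ = p ^ n + q ^ n := by ring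

theorem cosh_le_cosh_mul_cosh_of_sq_add_sq (x a b : ℝ) (hx : 0 ≤ x)
    (ha : 0 ≤ a) (hb : 0 ≤ b) (hab : a ^ 2 + b ^ 2 = 1) :
    Real.cosh x ≤ Real.cosh (a * x) * Real.cosh (b * x) := by
  set s := a * x + b * x with hs
  set d := a * x - b * x with hd
  have key : 2 * Real.cosh x ≤ Real.cosh s + Real.cosh d := by
    refine hasSum_le (fun n => ?_) ((Real.hasSum_cosh x).mul_left 2)
      ((Real.hasSum_cosh s).add (Real.hasSum_cosh d))
    have hfac : (0:ℝ) < ((2 * n).factorial : ℝ) := by exact_mod_cast (2 * n).factorial_pos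
    rw [← add_div, mul_div_assoc']
    apply div_le_div_of_nonneg_right _ hfac.le
    have hsq : (s ^ 2 + d ^ 2) / 2 = x ^ 2 := by
      rw [hs, hd]; nlinarith [hab]
    calc 2 * x ^ (2 * n) = 2 * ((s ^ 2 + d ^ 2) / 2) ^ n := by
          rw [hsq, ← pow_mul, Nat.mul_comm]
      _ ≤ (s ^ 2) ^ n + (d ^ 2) ^ n := pow_midpoint n _ _ (sq_nonneg s) (sq_nonneg d)
      _ = s ^ (2 * n) + d ^ (2 * n) := by rw [← pow_mul, ← pow_mul]
  have hid : Real.cosh s + Real.cosh d = 2 * (Real.cosh (a*x) * Real.cosh (b*x)) := by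
    rw [hs, hd, Real.cosh_add, Real.cosh_sub]; ring
  have hx' : Real.cosh x ≤ Real.cosh ((a + b) * x) := by
    apply Real.cosh_le_cosh.2
    rw [abs_of_nonneg hx, abs_of_nonneg (by positivity)]
    nlinarith [sq_nonneg (a - b), mul_nonneg (mul_nonneg ha hb) hx]
  linarith [key, hid.le, hid.ge]
end

section
/- For all nonnegative real numbers u, v and natural number n, (u + v)^n ≤ ((√u + √v)^(2n) + (√u − √v)^(2n))/2. -/
theorem add_pow_le_half_add (u v : ℝ) (hu : 0 ≤ u) (hv : 0 ≤ v) (n : ℕ) :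
    (u + v) ^ n ≤
      ((Real.sqrt u + Real.sqrt v) ^ (2 * n) + (Real.sqrt u - Real.sqrt v) ^ (2 * n)) / 2 := by
  set a := Real.sqrt u
  set b := Real.sqrt v
  have ha : a ^ 2 = u := Real.sq_sqrt hu
  have hb : b ^ 2 = v := Real.sq_sqrt hv
  have hx : (0:ℝ) ≤ (a + b) ^ 2 := sq_nonneg _
  have hy : (0:ℝ) ≤ (a - b) ^ 2 := sq_nonneg _
  have hsum : (a + b) ^ 2 + (a - b) ^ 2 = 2 * (u + v) := by
    rw [← ha, ← hb]; ring
  rcases Nat.eq_zero_or_pos n with rfl | hn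
  · norm_num
  have key := add_pow_le hx hy n
  rw [hsum, ← pow_mul, ← pow_mul, mul_pow] at key
  have h2 : (2:ℝ) ^ n = 2 ^ (n - 1) * 2 := by
    rw [← pow_succ, Nat.sub_add_cancel hn]
  rw [h2, mul_assoc] at key
  have hpos : (0:ℝ) < 2 ^ (n - 1) := by positivity
  have key2 : 2 * (u + v) ^ n ≤ (a + b) ^ (2 * n) + (a - b) ^ (2 * n) :=
    le_of_mul_le_mul_left key hpos
  linarith
end

section
/- Let δ ∈ (0,1) and let L, L_cri be positive reals with 0 < L ≤ L_cri. Define for y ≥ 1 and real index a > 0 the extended Chebyshev function T_a(y) = cosh(a·arcosh(y)). Then cosh(L · arcosh(T_{1/L}(1/δ)/T_{1/L_cri}(1/δ))) ≤ T_{√(1 − L²/L_cri²)}(1/δ). -/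
open Real hiding arcosh cosh_arcosh arcosh_nonneg
open Set

/-- Inverse hyperbolic cosine on `[1, ∞)`. -/
noncomputable def arcosh (x : ℝ) : ℝ := Real.log (x + Real.sqrt (x ^ 2 - 1))

private lemma sinh_le_mul_cosh {y : ℝ} (hy : 0 ≤ y) : Real.sinh y ≤ y * Real.cosh y := by
  have hmono : MonotoneOn (fun y : ℝ => y * Real.cosh y - Real.sinh y) (Ici 0) := by
    apply monotoneOn_of_deriv_nonneg (convex_Ici 0)
    · exact ((continuous_id.mul Real.continuous_cosh).sub Real.continuous_sinh).continuousOn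
    · intro x hx
      exact (((hasDerivAt_id x).mul (Real.hasDerivAt_cosh x)).sub
        (Real.hasDerivAt_sinh x)).differentiableAt.differentiableWithinAt
    · intro x hx
      rw [interior_Ici] at hx
      have h : HasDerivAt (fun y : ℝ => y * Real.cosh y - Real.sinh y) (x * Real.sinh x) x := by
        have := ((hasDerivAt_id x).mul (Real.hasDerivAt_cosh x)).sub (Real.hasDerivAt_sinh x)
        exact this.congr_deriv (by simp only [id_eq]; ring)
      rw [h.deriv]
      exact mul_nonneg (le_of_lt hx) (Real.sinh_nonneg_iff.mpr (le_of_lt hx))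
  have := hmono (self_mem_Ici) hy hy
  simpa using this

private lemma sinh_div_monotone : MonotoneOn (fun y : ℝ => Real.sinh y / y) (Ioi 0) := by
  have hint : interior (Ioi (0:ℝ)) = Ioi 0 := interior_Ioi
  apply monotoneOn_of_deriv_nonneg (convex_Ioi 0)
  · apply ContinuousOn.div Real.continuous_sinh.continuousOn continuousOn_id
    intro x hx
    exact ne_of_gt hx
  · intro x hx
    rw [hint] at hx
    exact (((Real.hasDerivAt_sinh x).div (hasDerivAt_id x) (ne_of_gt hx))).differentiableAt.differentiableWithinAt
  · intro x hx
    rw [hint] at hx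
    have h : HasDerivAt (fun y : ℝ => Real.sinh y / y)
        ((Real.cosh x * x - Real.sinh x * 1) / x ^ 2) x :=
      (Real.hasDerivAt_sinh x).div (hasDerivAt_id x) (ne_of_gt hx)
    rw [h.deriv]
    apply div_nonneg _ (sq_nonneg x)
    have := sinh_le_mul_cosh (le_of_lt hx)
    nlinarith

private lemma convexOn_cosh_sqrt : ConvexOn ℝ (Ici 0) (fun u : ℝ => Real.cosh (Real.sqrt u)) := by
  have hint : interior (Ici (0:ℝ)) = Ioi 0 := interior_Ici
  have hderiv : ∀ x ∈ Ioi (0:ℝ), HasDerivAt (fun u : ℝ => Real.cosh (Real.sqrt u))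
      (Real.sinh (Real.sqrt x) * (1 / (2 * Real.sqrt x))) x := by
    intro x hx
    exact (Real.hasDerivAt_cosh (Real.sqrt x)).comp x (Real.hasDerivAt_sqrt (ne_of_gt hx))
  apply MonotoneOn.convexOn_of_deriv (convex_Ici 0)
  · exact (Real.continuous_cosh.comp Real.continuous_sqrt).continuousOn
  · rw [hint]
    intro x hx
    exact (hderiv x hx).differentiableAt.differentiableWithinAt
  · rw [hint]
    intro a ha b hb hab
    rw [(hderiv a ha).deriv, (hderiv b hb).deriv]
    have hsa : 0 < Real.sqrt a := Real.sqrt_pos.mpr ha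
    have hsb : 0 < Real.sqrt b := Real.sqrt_pos.mpr hb
    have hmono' : Real.sinh (Real.sqrt a) / Real.sqrt a ≤ Real.sinh (Real.sqrt b) / Real.sqrt b :=
      sinh_div_monotone hsa hsb (Real.sqrt_le_sqrt hab)
    have ea : Real.sinh (Real.sqrt a) * (1 / (2 * Real.sqrt a))
        = (Real.sinh (Real.sqrt a) / Real.sqrt a) / 2 := by
      rw [mul_one_div, div_div, mul_comm]
    have eb : Real.sinh (Real.sqrt b) * (1 / (2 * Real.sqrt b))
        = (Real.sinh (Real.sqrt b) / Real.sqrt b) / 2 := by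
      rw [mul_one_div, div_div, mul_comm]
    rw [ea, eb]
    linarith

private lemma cosh_le_mul {x s t : ℝ} (hx : 0 ≤ x) (hs : 0 ≤ s) (ht : 0 ≤ t)
    (hst : s ^ 2 + t ^ 2 = 1) :
    Real.cosh x ≤ Real.cosh (s * x) * Real.cosh (t * x) := by
  have h1 := Real.cosh_add (s * x) (t * x)
  have h2 := Real.cosh_sub (s * x) (t * x)
  have prod : Real.cosh (s * x) * Real.cosh (t * x)
      = (Real.cosh ((s + t) * x) + Real.cosh ((s - t) * x)) / 2 := by
    have e1 : (s + t) * x = s * x + t * x := by ring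
    have e2 : (s - t) * x = s * x - t * x := by ring
    rw [e1, e2, h1, h2]; ring
  rw [prod]
  set u := ((s + t) * x) ^ 2 with hu
  set v := ((s - t) * x) ^ 2 with hv
  have hu0 : u ∈ Ici (0:ℝ) := mem_Ici.mpr (sq_nonneg _)
  have hv0 : v ∈ Ici (0:ℝ) := mem_Ici.mpr (sq_nonneg _)
  have hconv := convexOn_cosh_sqrt.2 hu0 hv0 (by norm_num : (0:ℝ) ≤ 1/2)
    (by norm_num : (0:ℝ) ≤ 1/2) (by norm_num)
  have hmid : (1/2 : ℝ) * u + (1/2 : ℝ) * v = x ^ 2 := by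
    rw [hu, hv]
    linear_combination x ^ 2 * hst
  simp only [smul_eq_mul] at hconv
  rw [hmid] at hconv
  have hsx : Real.sqrt (x ^ 2) = x := Real.sqrt_sq hx
  have hsu : Real.sqrt u = (s + t) * x := Real.sqrt_sq (by positivity)
  have hsv : Real.cosh (Real.sqrt v) = Real.cosh ((s - t) * x) := by
    rw [hv, Real.sqrt_sq_eq_abs, Real.cosh_abs]
  rw [hsx, hsu, hsv] at hconv
  linarith

private lemma arcosh_nonneg {y : ℝ} (hy : 1 ≤ y) : 0 ≤ arcosh y := by
  apply Real.log_nonneg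
  nlinarith [Real.sqrt_nonneg (y ^ 2 - 1)]

private lemma cosh_arcosh {y : ℝ} (hy : 1 ≤ y) : Real.cosh (arcosh y) = y := by
  have hs : 0 ≤ Real.sqrt (y ^ 2 - 1) := Real.sqrt_nonneg _
  have h1 : (0:ℝ) < y + Real.sqrt (y ^ 2 - 1) := by nlinarith
  have hsq : Real.sqrt (y ^ 2 - 1) ^ 2 = y ^ 2 - 1 := Real.sq_sqrt (by nlinarith)
  rw [arcosh, Real.cosh_eq, Real.exp_log h1, Real.exp_neg, Real.exp_log h1]
  field_simp
  nlinarith [hsq]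

private lemma arcosh_le {X c : ℝ} (hX : 1 ≤ X) (hc : 0 ≤ c) (h : X ≤ Real.cosh c) :
    arcosh X ≤ c := by
  have h1 : Real.cosh (arcosh X) ≤ Real.cosh c := by rw [cosh_arcosh hX]; exact h
  have h2 := Real.cosh_le_cosh.mp h1
  rwa [abs_of_nonneg (arcosh_nonneg hX), abs_of_nonneg hc] at h2

theorem key_chebyshev_inequality (δ L Lcri : ℝ) (hδ : δ ∈ Set.Ioo (0:ℝ) 1)
    (hL : 0 < L) (hle : L ≤ Lcri) :
    Real.cosh (L * arcosh (Real.cosh ((1 / L) * arcosh (1 / δ)) /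
        Real.cosh ((1 / Lcri) * arcosh (1 / δ)))) ≤
      Real.cosh (Real.sqrt (1 - L ^ 2 / Lcri ^ 2) * arcosh (1 / δ)) := by
  obtain ⟨hδ0, hδ1⟩ := hδ
  have hLcri : 0 < Lcri := lt_of_lt_of_le hL hle
  have hy : 1 ≤ 1 / δ := by rw [le_div_iff₀ hδ0]; linarith
  set u := arcosh (1 / δ) with hu
  have hu0 : 0 ≤ u := arcosh_nonneg hy
  set s := Real.sqrt (1 - L ^ 2 / Lcri ^ 2) with hs
  set t := L / Lcri with ht
  have ht0 : 0 ≤ t := by positivity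
  have hs0 : 0 ≤ s := Real.sqrt_nonneg _
  have htle : L ^ 2 / Lcri ^ 2 ≤ 1 := by
    rw [div_le_one (by positivity)]; nlinarith
  have hst : s ^ 2 + t ^ 2 = 1 := by
    rw [hs, Real.sq_sqrt (by linarith), ht, div_pow]; ring
  have key := cosh_le_mul (x := u / L) (by positivity) hs0 ht0 hst
  have htu : t * (u / L) = 1 / Lcri * u := by
    rw [ht]; field_simp
  have hul : (1 / L) * u = u / L := one_div_mul_eq_div L u
  rw [htu] at key
  have hcoshpos : 0 < Real.cosh (1 / Lcri * u) := Real.cosh_pos _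
  have hX1 : 1 ≤ Real.cosh ((1 / L) * u) / Real.cosh ((1 / Lcri) * u) := by
    rw [le_div_iff₀ hcoshpos, one_mul]
    apply Real.cosh_le_cosh.mpr
    rw [abs_of_nonneg (by positivity), abs_of_nonneg (by positivity)]
    apply mul_le_mul_of_nonneg_right _ hu0
    exact one_div_le_one_div_of_le hL hle
  have hXle : Real.cosh ((1 / L) * u) / Real.cosh ((1 / Lcri) * u)
      ≤ Real.cosh (s * (u / L)) := by
    rw [div_le_iff₀ hcoshpos, hul]
    exact key
  have harc : arcosh (Real.cosh ((1 / L) * u) / Real.cosh ((1 / Lcri) * u)) ≤ s * (u / L) :=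
    arcosh_le hX1 (by positivity) hXle
  apply Real.cosh_le_cosh.mpr
  rw [abs_of_nonneg (mul_nonneg hL.le (arcosh_nonneg hX1)),
    abs_of_nonneg (mul_nonneg hs0 hu0)]
  have := mul_le_mul_of_nonneg_left harc hL.le
  calc L * arcosh (Real.cosh ((1 / L) * u) / Real.cosh ((1 / Lcri) * u))
      ≤ L * (s * (u / L)) := this
    _ = s * u := by field_simp
end

section
/- Let λ ∈ (0,1) and δ ∈ (0,1), and define T_{1/L}(1/δ) = cosh(arcosh(1/δ)/L) for a positive real L. If L ≥ ln(2/δ)/√λ, then T_{1/L}(1/δ)·√(1−λ) ≤ 1. -/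
theorem chebyshev_arg_le_one (lam δ L : ℝ)
    (hlam : lam ∈ Set.Ioo (0:ℝ) 1) (hδ : δ ∈ Set.Ioo (0:ℝ) 1)
    (hL : Real.log (2 / δ) / Real.sqrt lam ≤ L) :
    Real.cosh (arcosh (1 / δ) / L) * Real.sqrt (1 - lam) ≤ 1 := by
  obtain ⟨hl0, hl1⟩ := hlam
  obtain ⟨hδ0, hδ1⟩ := hδ
  have hs : 0 < Real.sqrt lam := Real.sqrt_pos.mpr hl0
  have hlog : 0 < Real.log (2 / δ) :=
    Real.log_pos (by rw [lt_div_iff₀ hδ0]; linarith)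
  have hL0 : 0 < L := lt_of_lt_of_le (div_pos hlog hs) hL
  -- arcosh (1/δ) bounds
  have hx1 : (1:ℝ) ≤ 1 / δ := by rw [le_div_iff₀ hδ0]; linarith
  have hxpos : (0:ℝ) < 1 / δ := by positivity
  have hsq : Real.sqrt ((1/δ)^2 - 1) ≤ 1/δ := by
    calc Real.sqrt ((1/δ)^2 - 1) ≤ Real.sqrt ((1/δ)^2) :=
          Real.sqrt_le_sqrt (by linarith)
      _ = 1/δ := Real.sqrt_sq hxpos.le
  have harc_le : arcosh (1/δ) ≤ Real.log (2/δ) := by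
    unfold arcosh
    have : (1:ℝ)/δ + Real.sqrt ((1/δ)^2 - 1) ≤ 2/δ := by
      have : (2:ℝ)/δ = 1/δ + 1/δ := by ring
      linarith
    exact Real.log_le_log (by positivity) this
  have harc_nonneg : 0 ≤ arcosh (1/δ) := by
    unfold arcosh
    apply Real.log_nonneg
    have := Real.sqrt_nonneg ((1/δ)^2 - 1)
    linarith
  have ha_le : arcosh (1/δ) / L ≤ Real.sqrt lam := by
    rw [div_le_iff₀ hL0]
    have h1 : Real.log (2/δ) ≤ Real.sqrt lam * L := by
      rw [div_le_iff₀ hs] at hL; linarith [hL]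
    linarith
  have ha_nonneg : 0 ≤ arcosh (1/δ) / L := div_nonneg harc_nonneg hL0.le
  have hcosh : Real.cosh (arcosh (1/δ) / L) ≤ Real.exp (lam / 2) := by
    calc Real.cosh (arcosh (1/δ) / L) ≤ Real.cosh (Real.sqrt lam) := by
          rw [Real.cosh_le_cosh, abs_of_nonneg ha_nonneg, abs_of_nonneg hs.le]
          exact ha_le
      _ ≤ Real.exp ((Real.sqrt lam) ^ 2 / 2) := Real.cosh_le_exp_half_sq _
      _ = Real.exp (lam / 2) := by rw [Real.sq_sqrt hl0.le]
  have hsqrt : Real.sqrt (1 - lam) ≤ Real.exp (-(lam / 2)) := by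
    have h1 : 1 - lam ≤ Real.exp (-lam) := by
      have := Real.add_one_le_exp (-lam); linarith
    calc Real.sqrt (1 - lam) ≤ Real.sqrt (Real.exp (-lam)) := Real.sqrt_le_sqrt h1
      _ = Real.exp (-(lam/2)) := by
          rw [show Real.exp (-lam) = Real.exp (-(lam/2)) ^ 2 by
              rw [sq, ← Real.exp_add]; ring_nf,
            Real.sqrt_sq (Real.exp_pos _).le]
  calc Real.cosh (arcosh (1/δ) / L) * Real.sqrt (1 - lam)
      ≤ Real.exp (lam/2) * Real.exp (-(lam/2)) := by
        apply mul_le_mul hcosh hsqrt (Real.sqrt_nonneg _) (Real.exp_pos _).le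
    _ = 1 := by rw [← Real.exp_add]; simp
end

section
/- Let δ ∈ (0,1) and λ ∈ (0,1). If L ≥ ln(2/δ)/√λ, then 1 − δ²·(T_L(T_{1/L}(1/δ)·√(1−λ)))² ≥ 1 − δ², where T_L(x) = cos(L·arccos x) for |x| ≤ 1 and T_a(y) = cosh(a·arcosh y) for y ≥ 1. -/
/-- Extended Chebyshev function of the first kind with real index `a`:
`cosh (a * arcosh x)` for `x ≥ 1`, and `cos (a * arccos x)` for `|x| ≤ 1`. -/
noncomputable def T (a x : ℝ) : ℝ :=
  if 1 ≤ x then Real.cosh (a * arcosh x) else Real.cos (a * Real.arccos x)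

theorem fixed_point_property (δ lam L : ℝ)
    (hδ : δ ∈ Set.Ioo (0:ℝ) 1) (hlam : lam ∈ Set.Ioo (0:ℝ) 1)
    (hL : Real.log (2 / δ) / Real.sqrt lam ≤ L) :
    1 - δ ^ 2 ≤ 1 - δ ^ 2 * (T L (T (1 / L) (1 / δ) * Real.sqrt (1 - lam))) ^ 2 := by
  obtain ⟨hδ0, hδ1⟩ := hδ
  obtain ⟨hlam0, hlam1⟩ := hlam
  have hslam : 0 < Real.sqrt lam := Real.sqrt_pos.mpr hlam0
  have hlog : 0 < Real.log (2 / δ) := Real.log_pos (by rw [lt_div_iff₀ hδ0]; linarith)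
  have hLpos : 0 < L := lt_of_lt_of_le (div_pos hlog hslam) hL
  -- arcosh (1/δ) bounds
  have h1δ : (1:ℝ) ≤ 1 / δ := by rw [le_div_iff₀ hδ0]; linarith
  set t := arcosh (1 / δ) with ht
  have ht0 : 0 ≤ t := Real.log_nonneg (by
    have : 0 ≤ Real.sqrt ((1/δ)^2 - 1) := Real.sqrt_nonneg _
    linarith)
  have htle : t ≤ Real.log (2 / δ) := by
    apply Real.log_le_log (by positivity)
    have : Real.sqrt ((1/δ)^2 - 1) ≤ Real.sqrt ((1/δ)^2) :=
      Real.sqrt_le_sqrt (by linarith [sq_nonneg (1/δ)])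
    rw [Real.sqrt_sq (by positivity)] at this
    rw [div_eq_mul_one_div 2 δ]
    linarith
  -- t / L ≤ sqrt lam
  have hdiv : t / L ≤ Real.sqrt lam := by
    rw [div_le_iff₀ hLpos]
    calc t ≤ Real.log (2 / δ) := htle
      _ = Real.log (2 / δ) / Real.sqrt lam * Real.sqrt lam := by
          field_simp
      _ ≤ L * Real.sqrt lam := mul_le_mul_of_nonneg_right hL hslam.le
      _ = Real.sqrt lam * L := mul_comm _ _
  -- first factor
  have hT1 : T (1/L) (1/δ) = Real.cosh (t / L) := by
    rw [T, if_pos h1δ, one_div, inv_mul_eq_div]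
  have hcosh : Real.cosh (t / L) ≤ Real.exp (lam / 2) := by
    refine (Real.cosh_le_exp_half_sq _).trans (Real.exp_le_exp.mpr ?_)
    have : (t/L)^2 ≤ lam := by
      have := mul_self_le_mul_self (by positivity) hdiv
      rwa [← pow_two, ← pow_two, Real.sq_sqrt hlam0.le] at this
    linarith
  -- second factor
  have hsqrt : Real.sqrt (1 - lam) ≤ Real.exp (-lam / 2) := by
    rw [Real.exp_half]
    exact Real.sqrt_le_sqrt (by linarith [Real.add_one_le_exp (-lam)])
  -- the product x
  set x := T (1/L) (1/δ) * Real.sqrt (1 - lam) with hx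
  have hx0 : 0 ≤ x := mul_nonneg (hT1 ▸ (Real.cosh_pos _).le) (Real.sqrt_nonneg _)
  have hx1 : x ≤ 1 := by
    calc x ≤ Real.exp (lam/2) * Real.exp (-lam/2) := by
          exact mul_le_mul (hT1 ▸ hcosh) hsqrt (Real.sqrt_nonneg _) (Real.exp_pos _).le
      _ = 1 := by rw [← Real.exp_add]; ring_nf; exact Real.exp_zero
  -- |T L x| ≤ 1
  have hTbound : (T L x)^2 ≤ 1 := by
    rw [T]
    split_ifs with h
    · have hx1' : x = 1 := le_antisymm hx1 h
      rw [hx1']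
      simp [arcosh]
    · rw [sq_le_one_iff_abs_le_one]
      exact Real.abs_cos_le_one _
  nlinarith [sq_nonneg δ, hTbound]
end
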